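/- Let G be a normal subgroup of a group K with quotient H = K/G. Then K embeds into the wreath product G ≀ H = G^H ⋊ H, where H acts on the direct product G^H by permuting coordinates via left translation. -/

import Mathlib

/-- The action of `H` on `H → G` permuting the coordinates by left translation. -/
def wreathAct (G H : Type*) [Group G] [Group H] : H →* MulAut (H → G) where
  toFun h :=
    { toFun := fun f x => f (h⁻¹ * x)
      invFun := fun f x => f (h * x)
      left_inv := fun f => funext fun x => by simp
      right_inv := fun f => funext fun x => by simp
      map_mul' := fun f g => rfl }
  map_one' := by ext f x; simp
  map_mul' := fun a b => by ext f x; simp [mul_assoc]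

/-- The (regular, unrestricted) wreath product `G ≀ H = G^H ⋊ H`. -/
abbrev Wreath (G H : Type*) [Group G] [Group H] : Type _ :=
  (H → G) ⋊[wreathAct G H] H

section KKAux

variable {K : Type*} [Group K] (G : Subgroup K) [G.Normal]

/-- The "base" component of the Kaloujnine–Krasner embedding, built from the section
`Quotient.out` of the quotient map: `kkFun k x = (out x)⁻¹ * k * out ((mk k)⁻¹ * x)`. -/
noncomputable def kkFun (k : K) (x : K ⧸ G) : G :=
  ⟨(Quotient.out x)⁻¹ * k * Quotient.out ((QuotientGroup.mk k)⁻¹ * x), by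
    rw [← QuotientGroup.eq_one_iff]
    simp [QuotientGroup.out_eq']⟩

lemma kkFun_mul (k₁ k₂ : K) :
    kkFun G (k₁ * k₂) = fun x => kkFun G k₁ x * kkFun G k₂ ((QuotientGroup.mk k₁)⁻¹ * x) := by
  funext x
  ext
  simp only [kkFun, Subgroup.coe_mul, MulMemClass.mk_mul_mk, QuotientGroup.mk_mul,
    mul_inv_rev, mul_assoc]
  group

end KKAux

/-- Kaloujnine–Krasner: If `G` is a normal subgroup of `K` with quotient
`H = K ⧸ G`, then `K` embeds into the wreath product `G ≀ H = G^H ⋊ H`. -/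
theorem kaloujnine_krasner_embedding
    (K : Type*) [Group K] (G : Subgroup K) [G.Normal] :
    ∃ φ : K →* Wreath G (K ⧸ G), Function.Injective φ := by
  refine ⟨{ toFun := fun k => ⟨kkFun G k, QuotientGroup.mk k⟩
            map_one' := ?_
            map_mul' := fun k₁ k₂ => ?_ }, fun k₁ k₂ h => ?_⟩
  · ext x
    · simp [kkFun]
    · simp
  · ext x
    · show (kkFun G (k₁ * k₂) x : K) = _
      rw [kkFun_mul]
      rfl
    · simp
  · have h1 : QuotientGroup.mk k₁ = (QuotientGroup.mk k₂ : K ⧸ G) :=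
      congrArg SemidirectProduct.right h
    have h2 : kkFun G k₁ = kkFun G k₂ := congrArg SemidirectProduct.left h
    have := congrArg (fun f => ((f (1 : K ⧸ G)) : K)) h2
    simp only [kkFun] at this
    rw [h1] at this
    exact mul_left_cancel (mul_right_cancel this)
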